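/- There exists C > 0 such that the following holds. Let w : ℝ² → ℝ be measurable with ‖w‖_{L¹₄} := ∫_{ℝ²} ⟨x⟩⁴ |w(x)| dx < ∞ and ‖w‖_{L^∞₄} := ess sup_{x∈ℝ²} ⟨x⟩⁴ |w(x)| < ∞. Define, for x ∈ ℝ², U(x) := ∫_{ℝ²} K(x,y) w(y) dy ∈ ℝ³, where K(x,y) := −(1/(4π)) ∫_{ℝ} ( ((x₁,x₂,0) − (R_a y, a)) × ξ((R_a y, a)) ) (|x − R_a y|² + a²)^{−3/2} da (cross product in ℝ³), and set Hw(x) := (U¹(x), U²(x)) + (−x₂, x₁) U³(x) ∈ ℝ². Then | ∫_{ℝ²} w(x) Hw(x) dx + (1/(4π)) ∫_{ℝ²} ∫_{ℝ²} log(1/|x−y|) 1_{|x−y|≤1} (x^⊥/⟨x⟩) w(x) w(y) dx dy | ≤ C ( ‖w‖_{L¹₄} + ‖w‖_{L^∞₄} )², where the inequality is between vectors in ℝ² measured in the Euclidean norm. -/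

import Mathlib

open MeasureTheory Real intervalIntegral

/-- Euclidean norm on `ℝ²`. -/
noncomputable def vnorm (x : ℝ × ℝ) : ℝ := Real.sqrt (x.1 ^ 2 + x.2 ^ 2)

/-- Rotation `R_a` on `ℝ²`. -/
noncomputable def vrot (a : ℝ) (x : ℝ × ℝ) : ℝ × ℝ :=
  (x.1 * Real.cos a + x.2 * Real.sin a, -x.1 * Real.sin a + x.2 * Real.cos a)

/-- Japanese bracket `⟨x⟩ = √(1+|x|²)` on `ℝ²`. -/
noncomputable def jap (x : ℝ × ℝ) : ℝ := Real.sqrt (1 + x.1 ^ 2 + x.2 ^ 2)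

/-- Cross product on `ℝ³ = ℝ × ℝ × ℝ`. -/
def cross3 (u v : ℝ × ℝ × ℝ) : ℝ × ℝ × ℝ :=
  (u.2.1 * v.2.2 - u.2.2 * v.2.1, u.2.2 * v.1 - u.1 * v.2.2, u.1 * v.2.1 - u.2.1 * v.1)

/-- The vector field `ξ(z) = (z₂, −z₁, 1)`. -/
def xi3 (z : ℝ × ℝ × ℝ) : ℝ × ℝ × ℝ := (z.2.1, -z.1, 1)

/-- Euclidean norm on `ℝ³ = ℝ × ℝ × ℝ`. -/
noncomputable def norm3 (v : ℝ × ℝ × ℝ) : ℝ := Real.sqrt (v.1 ^ 2 + v.2.1 ^ 2 + v.2.2 ^ 2)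

/-- The perpendicular vector `x^⊥ = (−x₂, x₁)`. -/
def vperp (x : ℝ × ℝ) : ℝ × ℝ := (-x.2, x.1)

/-- The modified Biot–Savart kernel of the helical Euler equation. -/
noncomputable def biotK (x y : ℝ × ℝ) : ℝ × ℝ × ℝ :=
  (-(1 / (4 * π))) • ∫ a : ℝ,
    (1 / Real.sqrt (vnorm (x - vrot a y) ^ 2 + a ^ 2) ^ 3) •
      cross3 (x.1 - (vrot a y).1, x.2 - (vrot a y).2, -a)
        (xi3 ((vrot a y).1, (vrot a y).2, a))

/-- The velocity `U(x) = ∫ K(x,y) w(y) dy ∈ ℝ³`. -/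
noncomputable def Uvel (w : ℝ × ℝ → ℝ) (x : ℝ × ℝ) : ℝ × ℝ × ℝ :=
  ∫ y : ℝ × ℝ, w y • biotK x y

/-- The planar helical velocity field `Hw(x) = (U¹,U²) + (−x₂,x₁) U³`. -/
noncomputable def Hvel (w : ℝ × ℝ → ℝ) (x : ℝ × ℝ) : ℝ × ℝ :=
  ((Uvel w x).1, (Uvel w x).2.1) + (Uvel w x).2.2 • vperp x

/-! ### Auxiliary lemmas -/

open Set Metric

lemma vnorm_nonneg (x : ℝ × ℝ) : 0 ≤ vnorm x := Real.sqrt_nonneg _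

lemma vnorm_sq (x : ℝ × ℝ) : vnorm x ^ 2 = x.1 ^ 2 + x.2 ^ 2 := Real.sq_sqrt (by positivity)

lemma norm_le_vnorm (x : ℝ × ℝ) : ‖x‖ ≤ vnorm x := by
  rw [Prod.norm_def]
  apply max_le <;> rw [Real.norm_eq_abs, ← Real.sqrt_sq_eq_abs] <;>
    exact Real.sqrt_le_sqrt (by nlinarith [sq_nonneg x.1, sq_nonneg x.2])

lemma vnorm_le_norm (x : ℝ × ℝ) : vnorm x ≤ Real.sqrt 2 * ‖x‖ := by
  have h1 : |x.1| ≤ ‖x‖ := (Real.norm_eq_abs x.1) ▸ norm_fst_le x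
  have h2 : |x.2| ≤ ‖x‖ := (Real.norm_eq_abs x.2) ▸ norm_snd_le x
  have hn : (0:ℝ) ≤ ‖x‖ := norm_nonneg x
  rw [vnorm, show Real.sqrt 2 * ‖x‖ = Real.sqrt (2 * ‖x‖^2) by
    rw [Real.sqrt_mul (by norm_num), Real.sqrt_sq hn]]
  exact Real.sqrt_le_sqrt (by nlinarith [abs_nonneg x.1, abs_nonneg x.2, sq_abs x.1, sq_abs x.2])

lemma vnorm_pos {x : ℝ × ℝ} (h : x ≠ 0) : 0 < vnorm x := by
  rcases lt_or_eq_of_le (vnorm_nonneg x) with h' | h'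
  · exact h'
  · exfalso; apply h
    have hs := vnorm_sq x
    rw [← h'] at hs
    have h1 : x.1 = 0 := by nlinarith [sq_nonneg x.1, sq_nonneg x.2]
    have h2 : x.2 = 0 := by nlinarith [sq_nonneg x.1, sq_nonneg x.2]
    exact Prod.ext h1 h2

lemma one_le_jap (x : ℝ × ℝ) : 1 ≤ jap x := by
  rw [show (1:ℝ) = Real.sqrt 1 from (Real.sqrt_one).symm, jap]
  exact Real.sqrt_le_sqrt (by nlinarith [sq_nonneg x.1, sq_nonneg x.2])

lemma jap_pos (x : ℝ × ℝ) : 0 < jap x := lt_of_lt_of_le one_pos (one_le_jap x)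

lemma jap_sq (x : ℝ × ℝ) : jap x ^ 2 = 1 + x.1 ^ 2 + x.2 ^ 2 := Real.sq_sqrt (by positivity)

lemma norm_le_jap (x : ℝ × ℝ) : ‖x‖ ≤ jap x := by
  rw [Prod.norm_def]
  apply max_le <;> rw [Real.norm_eq_abs, ← Real.sqrt_sq_eq_abs] <;>
    exact Real.sqrt_le_sqrt (by nlinarith [sq_nonneg x.1, sq_nonneg x.2])

lemma norm3_nonneg (v : ℝ × ℝ × ℝ) : 0 ≤ norm3 v := Real.sqrt_nonneg _

lemma prod_norm_le_norm3 (v : ℝ × ℝ × ℝ) : ‖v‖ ≤ norm3 v := by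
  rw [Prod.norm_def, Prod.norm_def]
  refine max_le ?_ (max_le ?_ ?_) <;> rw [Real.norm_eq_abs, ← Real.sqrt_sq_eq_abs] <;>
    exact Real.sqrt_le_sqrt (by nlinarith [sq_nonneg v.1, sq_nonneg v.2.1, sq_nonneg v.2.2])

lemma norm3_smul (c : ℝ) (v : ℝ × ℝ × ℝ) : norm3 (c • v) = |c| * norm3 v := by
  have h : c • v = (c * v.1, c * v.2.1, c * v.2.2) := rfl
  rw [h, norm3, norm3, show (c*v.1)^2 + (c*v.2.1)^2 + (c*v.2.2)^2
      = c^2 * (v.1^2 + v.2.1^2 + v.2.2^2) by ring,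
    Real.sqrt_mul (sq_nonneg c), Real.sqrt_sq_eq_abs]

lemma norm3_cross3_le (u v : ℝ × ℝ × ℝ) : norm3 (cross3 u v) ≤ norm3 u * norm3 v := by
  rw [norm3, norm3, norm3, ← Real.sqrt_mul (by positivity)]
  refine Real.sqrt_le_sqrt ?_
  show (u.2.1 * v.2.2 - u.2.2 * v.2.1)^2 + (u.2.2 * v.1 - u.1 * v.2.2)^2
      + (u.1 * v.2.1 - u.2.1 * v.1)^2 ≤ _
  nlinarith [sq_nonneg (u.1 * v.1 + u.2.1 * v.2.1 + u.2.2 * v.2.2)]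

lemma vrot_sq (a : ℝ) (y : ℝ × ℝ) : (vrot a y).1 ^ 2 + (vrot a y).2 ^ 2 = y.1 ^ 2 + y.2 ^ 2 := by
  show (y.1 * Real.cos a + y.2 * Real.sin a)^2 + (-y.1 * Real.sin a + y.2 * Real.cos a)^2 = _
  nlinarith [Real.sin_sq_add_cos_sq a]

lemma vrot_dist_sq (a : ℝ) (y : ℝ × ℝ) :
    vnorm (vrot a y - y) ^ 2 ≤ (y.1 ^ 2 + y.2 ^ 2) * a ^ 2 := by
  rw [vnorm_sq]
  have h1 : (vrot a y - y).1 = y.1 * Real.cos a + y.2 * Real.sin a - y.1 := rfl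
  have h2 : (vrot a y - y).2 = -y.1 * Real.sin a + y.2 * Real.cos a - y.2 := rfl
  rw [h1, h2]
  have hs := Real.sin_sq_add_cos_sq a
  have hcos : 2 - 2 * Real.cos a ≤ a ^ 2 := by
    have h3 := Real.cos_sq (a/2)
    have h4 := Real.sin_sq_le_sq (x := a/2)
    have h5 := Real.sin_sq_add_cos_sq (a/2)
    have h6 : 2 * (a/2) = a := by ring
    rw [h6] at h3
    nlinarith
  have hy : (0:ℝ) ≤ y.1 ^ 2 + y.2 ^ 2 := by positivity
  nlinarith [mul_le_mul_of_nonneg_left hcos hy]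

lemma integrable_inv_sq_add (ρ : ℝ) (hρ : 0 < ρ) :
    Integrable (fun a : ℝ => (a ^ 2 + ρ ^ 2)⁻¹) := by
  have key : (fun a : ℝ => (a ^ 2 + ρ ^ 2)⁻¹)
      = fun a : ℝ => ρ⁻¹ ^ 2 * (1 + (ρ⁻¹ * a) ^ 2)⁻¹ := by
    funext a; field_simp; ring
  rw [key]
  exact (integrable_inv_one_add_sq.comp_mul_left' (inv_ne_zero hρ.ne')).const_mul _

lemma integral_inv_sq_add (ρ : ℝ) (hρ : 0 < ρ) :
    ∫ a : ℝ, (a ^ 2 + ρ ^ 2)⁻¹ = π / ρ := by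
  have key : (fun a : ℝ => (a ^ 2 + ρ ^ 2)⁻¹)
      = fun a : ℝ => ρ⁻¹ ^ 2 * (1 + (ρ⁻¹ * a) ^ 2)⁻¹ := by
    funext a; field_simp; ring
  rw [key, MeasureTheory.integral_const_mul]
  rw [MeasureTheory.Measure.integral_comp_mul_left (fun t : ℝ => (1 + t ^ 2)⁻¹) ρ⁻¹]
  rw [integral_univ_inv_one_add_sq, inv_inv, abs_of_pos hρ, smul_eq_mul]
  field_simp

lemma dist_sq_lower (x y : ℝ × ℝ) (a : ℝ) :
    vnorm (x - y) ^ 2 ≤ 2 * jap y ^ 2 * (vnorm (x - vrot a y) ^ 2 + a ^ 2) := by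
  have h1 : vnorm (x - y) ^ 2 ≤ 2 * vnorm (x - vrot a y) ^ 2 + 2 * vnorm (vrot a y - y) ^ 2 := by
    rw [vnorm_sq, vnorm_sq, vnorm_sq]
    have e1 : (x - y).1 = (x - vrot a y).1 + (vrot a y - y).1 := by simp
    have e2 : (x - y).2 = (x - vrot a y).2 + (vrot a y - y).2 := by simp
    rw [e1, e2]
    nlinarith [sq_nonneg ((x - vrot a y).1 - (vrot a y - y).1),
      sq_nonneg ((x - vrot a y).2 - (vrot a y - y).2)]
  have h2 := vrot_dist_sq a y
  have h3 := jap_sq y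
  nlinarith [vnorm_nonneg (x - vrot a y), sq_nonneg a, sq_nonneg (vnorm (x - vrot a y)),
    sq_nonneg y.1, sq_nonneg y.2]

lemma biotK_bound (x y : ℝ × ℝ) (h : x ≠ y) : ‖biotK x y‖ ≤ jap y ^ 2 / vnorm (x - y) := by
  set v := vnorm (x - y) with hv_def
  have hv : 0 < v := vnorm_pos (sub_ne_zero.mpr h)
  have hj := jap_pos y
  set ρ : ℝ := v / (Real.sqrt 2 * jap y) with hρ_def
  have hρ : 0 < ρ := div_pos hv (by positivity)
  have hρsq : ρ ^ 2 = v ^ 2 / (2 * jap y ^ 2) := by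
    rw [hρ_def, div_pow, mul_pow, Real.sq_sqrt (by norm_num : (0:ℝ) ≤ 2)]
  have hDsq : ∀ a : ℝ, ρ ^ 2 ≤ vnorm (x - vrot a y) ^ 2 + a ^ 2 := by
    intro a
    rw [hρsq, div_le_iff₀ (by positivity)]
    have := dist_sq_lower x y a
    nlinarith
  set F : ℝ → ℝ × ℝ × ℝ := fun a =>
    (1 / Real.sqrt (vnorm (x - vrot a y) ^ 2 + a ^ 2) ^ 3) •
      cross3 (x.1 - (vrot a y).1, x.2 - (vrot a y).2, -a)
        (xi3 ((vrot a y).1, (vrot a y).2, a)) with hF_def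
  have hFb : ∀ a : ℝ, ‖F a‖ ≤ 2 * jap y * (a ^ 2 + ρ ^ 2)⁻¹ := by
    intro a
    set Dsq := vnorm (x - vrot a y) ^ 2 + a ^ 2 with hDsq_def
    have hD0 : 0 < Dsq := lt_of_lt_of_le (by positivity) (hDsq a)
    set u : ℝ × ℝ × ℝ := (x.1 - (vrot a y).1, x.2 - (vrot a y).2, -a) with hu_def
    set ξ : ℝ × ℝ × ℝ := xi3 ((vrot a y).1, (vrot a y).2, a) with hξ_def
    have hnu : norm3 u = Real.sqrt Dsq := by
      rw [norm3, hDsq_def, vnorm_sq]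
      congr 1
      show (x.1 - (vrot a y).1) ^ 2 + (x.2 - (vrot a y).2) ^ 2 + (-a) ^ 2 = _
      have e1 : (x - vrot a y).1 = x.1 - (vrot a y).1 := rfl
      have e2 : (x - vrot a y).2 = x.2 - (vrot a y).2 := rfl
      rw [e1, e2]; ring
    have hnξ : norm3 ξ = jap y := by
      rw [hξ_def, norm3, jap]
      show Real.sqrt ((vrot a y).2 ^ 2 + (-(vrot a y).1) ^ 2 + 1 ^ 2) = _
      rw [show (vrot a y).2 ^ 2 + (-(vrot a y).1) ^ 2 + 1 ^ 2
          = 1 + ((vrot a y).1 ^ 2 + (vrot a y).2 ^ 2) by ring, vrot_sq]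
      congr 1; ring
    have hsq : Real.sqrt Dsq ^ 2 = Dsq := Real.sq_sqrt hD0.le
    have hsqrt_pos : 0 < Real.sqrt Dsq := Real.sqrt_pos.mpr hD0
    calc ‖F a‖ ≤ norm3 (F a) := prod_norm_le_norm3 _
      _ = |1 / Real.sqrt Dsq ^ 3| * norm3 (cross3 u ξ) := by rw [hF_def]; exact norm3_smul _ _
      _ ≤ (1 / Real.sqrt Dsq ^ 3) * (norm3 u * norm3 ξ) := by
          rw [abs_of_pos (by positivity)]
          exact mul_le_mul_of_nonneg_left (norm3_cross3_le u ξ) (by positivity)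
      _ = jap y / Dsq := by
          rw [hnu, hnξ]
          rw [show Real.sqrt Dsq ^ 3 = Real.sqrt Dsq ^ 2 * Real.sqrt Dsq by ring, hsq]
          field_simp
      _ ≤ 2 * jap y * (a ^ 2 + ρ ^ 2)⁻¹ := by
          have hpos : (0:ℝ) < a ^ 2 + ρ ^ 2 := by positivity
          rw [← div_eq_mul_inv, div_le_div_iff₀ hD0 hpos]
          have h1 := hDsq a
          have h2 : a ^ 2 ≤ Dsq := by rw [hDsq_def]; nlinarith [sq_nonneg (vnorm (x - vrot a y))]
          nlinarith [mul_le_mul_of_nonneg_left (add_le_add h2 h1) hj.le]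
  have hmaj : Integrable (fun a : ℝ => 2 * jap y * (a ^ 2 + ρ ^ 2)⁻¹) :=
    (integrable_inv_sq_add ρ hρ).const_mul _
  have hnorm_int : ‖∫ a : ℝ, F a‖ ≤ 2 * jap y * (π / ρ) := by
    calc ‖∫ a : ℝ, F a‖ ≤ ∫ a : ℝ, ‖F a‖ := norm_integral_le_integral_norm F
      _ ≤ ∫ a : ℝ, 2 * jap y * (a ^ 2 + ρ ^ 2)⁻¹ :=
          integral_mono_of_nonneg (Filter.Eventually.of_forall fun a => norm_nonneg _)
            hmaj (Filter.Eventually.of_forall hFb)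
      _ = 2 * jap y * (π / ρ) := by rw [MeasureTheory.integral_const_mul, integral_inv_sq_add ρ hρ]
  have hpi : (0:ℝ) < π := Real.pi_pos
  have hKe : ‖biotK x y‖ = 1 / (4 * π) * ‖∫ a : ℝ, F a‖ := by
    rw [biotK, norm_smul, Real.norm_eq_abs, abs_neg, abs_of_pos (by positivity)]
  rw [hKe]
  calc 1 / (4 * π) * ‖∫ a : ℝ, F a‖ ≤ 1 / (4 * π) * (2 * jap y * (π / ρ)) :=
        mul_le_mul_of_nonneg_left hnorm_int (by positivity)
    _ = jap y / (2 * ρ) := by field_simp; ring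
    _ = Real.sqrt 2 * jap y ^ 2 / (2 * v) := by
        rw [hρ_def]; field_simp
    _ ≤ jap y ^ 2 / v := by
        rw [div_le_div_iff₀ (by positivity) hv]
        have hs2 : Real.sqrt 2 ≤ 2 := by
          nlinarith [Real.sq_sqrt (show (0:ℝ) ≤ 2 by norm_num), Real.sqrt_nonneg 2]
        nlinarith [mul_le_mul_of_nonneg_right
          (mul_le_mul_of_nonneg_right hs2 (sq_nonneg (jap y))) hv.le]

/-! ### The singular majorant `‖z‖⁻¹` on the unit ball -/

noncomputable def Hfun : ℝ × ℝ → ℝ :=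
  Set.indicator (Metric.closedBall (0:ℝ × ℝ) 1) (fun z => ‖z‖⁻¹)

lemma Hfun_nonneg (z : ℝ × ℝ) : 0 ≤ Hfun z :=
  Set.indicator_nonneg (fun z _ => by positivity) z

lemma Hfun_measurable : Measurable Hfun :=
  (measurable_norm.inv).indicator measurableSet_closedBall

noncomputable def Gfun : ℝ → ℝ :=
  Set.indicator (Set.Ioc (0:ℝ) 1) (fun t => t ^ (-(1/2) : ℝ))

lemma Gfun_nonneg (t : ℝ) : 0 ≤ Gfun t :=
  Set.indicator_nonneg (fun t ht => Real.rpow_nonneg ht.1.le _) t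

lemma Gfun_integrable : Integrable Gfun := by
  rw [Gfun, integrable_indicator_iff measurableSet_Ioc]
  have h := intervalIntegral.intervalIntegrable_rpow' (a := 0) (b := 1)
    (show (-1:ℝ) < -(1/2) by norm_num)
  rw [intervalIntegrable_iff] at h
  simpa using h

lemma Gfun_eval {t : ℝ} (h0 : 0 < t) (h1 : t ≤ 1) : Gfun t = t ^ (-(1/2) : ℝ) :=
  Set.indicator_of_mem (Set.mem_Ioc.mpr ⟨h0, h1⟩) _

lemma Gfun_of_nonpos {t : ℝ} (h : t ≤ 0) : Gfun t = 0 :=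
  Set.indicator_of_notMem (fun hm => absurd (Set.mem_Ioc.mp hm).1 (not_lt.mpr h)) _

lemma Gfun_abs {t : ℝ} (h0 : t ≠ 0) (h1 : |t| ≤ 1) :
    Gfun t + Gfun (-t) = |t| ^ (-(1/2) : ℝ) := by
  rcases lt_or_gt_of_ne h0 with h | h
  · rw [Gfun_of_nonpos h.le, Gfun_eval (by linarith) (by rw [abs_of_neg h] at h1; linarith),
      abs_of_neg h, zero_add]
  · rw [Gfun_eval h (by rwa [abs_of_pos h] at h1), Gfun_of_nonpos (by linarith),
      abs_of_pos h, add_zero]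

lemma Hfun_integrable : Integrable Hfun := by
  have hG2 : Integrable (fun t : ℝ => Gfun t + Gfun (-t)) :=
    Gfun_integrable.add Gfun_integrable.comp_neg
  have hprod : Integrable (fun z : ℝ × ℝ => (Gfun z.1 + Gfun (-z.1)) * (Gfun z.2 + Gfun (-z.2))) := by
    rw [MeasureTheory.Measure.volume_eq_prod]
    exact hG2.mul_prod hG2
  refine hprod.mono' Hfun_measurable.aestronglyMeasurable ?_
  have hax1 : volume {z : ℝ × ℝ | z.1 = 0} = 0 := by
    have h : {z : ℝ × ℝ | z.1 = 0} = ({0} : Set ℝ) ×ˢ (Set.univ : Set ℝ) := by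
      ext ⟨z1, z2⟩; simp [eq_comm]
    rw [h, MeasureTheory.Measure.volume_eq_prod, MeasureTheory.Measure.prod_prod]
    simp
  have hax2 : volume {z : ℝ × ℝ | z.2 = 0} = 0 := by
    have h : {z : ℝ × ℝ | z.2 = 0} = (Set.univ : Set ℝ) ×ˢ ({0} : Set ℝ) := by
      ext ⟨z1, z2⟩; simp [eq_comm]
    rw [h, MeasureTheory.Measure.volume_eq_prod, MeasureTheory.Measure.prod_prod]
    simp
  have h1 : ∀ᵐ z : ℝ × ℝ, z.1 ≠ 0 := by rw [MeasureTheory.ae_iff]; simpa using hax1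
  have h2 : ∀ᵐ z : ℝ × ℝ, z.2 ≠ 0 := by rw [MeasureTheory.ae_iff]; simpa using hax2
  filter_upwards [h1, h2] with z hz1 hz2
  rw [Real.norm_eq_abs, abs_of_nonneg (Hfun_nonneg z)]
  by_cases hz : z ∈ Metric.closedBall (0:ℝ × ℝ) 1
  · rw [Hfun, Set.indicator_of_mem hz]
    have hzn : ‖z‖ ≤ 1 := by rwa [Metric.mem_closedBall, dist_zero_right] at hz
    have ha1 : |z.1| ≤ 1 := le_trans ((Real.norm_eq_abs z.1) ▸ norm_fst_le z) hzn
    have ha2 : |z.2| ≤ 1 := le_trans ((Real.norm_eq_abs z.2) ▸ norm_snd_le z) hzn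
    have hp1 : 0 < |z.1| := abs_pos.mpr hz1
    have hp2 : 0 < |z.2| := abs_pos.mpr hz2
    rw [Gfun_abs hz1 ha1, Gfun_abs hz2 ha2]
    have hmax : Real.sqrt (|z.1| * |z.2|) ≤ ‖z‖ := by
      have hle : |z.1| * |z.2| ≤ ‖z‖ ^ 2 := by
        have e1 : |z.1| ≤ ‖z‖ := (Real.norm_eq_abs z.1) ▸ norm_fst_le z
        have e2 : |z.2| ≤ ‖z‖ := (Real.norm_eq_abs z.2) ▸ norm_snd_le z
        nlinarith [abs_nonneg z.1, abs_nonneg z.2]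
      calc Real.sqrt (|z.1| * |z.2|) ≤ Real.sqrt (‖z‖ ^ 2) := Real.sqrt_le_sqrt hle
        _ = ‖z‖ := Real.sqrt_sq (norm_nonneg z)
    have hsqrtpos : 0 < Real.sqrt (|z.1| * |z.2|) := Real.sqrt_pos.mpr (by positivity)
    calc ‖z‖⁻¹ ≤ (Real.sqrt (|z.1| * |z.2|))⁻¹ := inv_anti₀ hsqrtpos hmax
      _ = |z.1| ^ (-(1/2) : ℝ) * |z.2| ^ (-(1/2) : ℝ) := by
          rw [Real.sqrt_eq_rpow, ← Real.rpow_neg_one ((|z.1| * |z.2|) ^ (1/(2:ℝ))),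
            ← Real.rpow_mul (by positivity : (0:ℝ) ≤ |z.1| * |z.2|),
            show (1/(2:ℝ)) * (-1) = -(1/2) by ring,
            Real.mul_rpow (abs_nonneg _) (abs_nonneg _)]
  · rw [Hfun, Set.indicator_of_notMem hz]
    have := Gfun_nonneg z.1
    have := Gfun_nonneg (-z.1)
    have := Gfun_nonneg z.2
    have := Gfun_nonneg (-z.2)
    positivity

set_option maxHeartbeats 2000000 in
/-- the self-interaction `∫ w Hw` equals
`−(1/4π) ∬ log(1/|x−y|) 1_{|x−y|≤1} (x^⊥/⟨x⟩) w(x)w(y)` up to an error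
`C (‖w‖_{L¹₄} + ‖w‖_{L^∞₄})²`. -/
theorem stmt_19 : ∃ C > (0:ℝ), ∀ w : ℝ × ℝ → ℝ, Measurable w →
    Integrable (fun x : ℝ × ℝ => jap x ^ 4 * |w x|) →
    eLpNorm (fun x : ℝ × ℝ => jap x ^ 4 * w x) ⊤ volume < ⊤ →
    vnorm ((∫ x : ℝ × ℝ, w x • Hvel w x)
        + (1 / (4 * π)) • ∫ x : ℝ × ℝ, ∫ y : ℝ × ℝ,
            (((if vnorm (x - y) ≤ 1 then Real.log (1 / vnorm (x - y)) else 0)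
                * w x * w y) / jap x) • vperp x)
      ≤ C * ((∫ x : ℝ × ℝ, jap x ^ 4 * |w x|)
          + (eLpNorm (fun x : ℝ × ℝ => jap x ^ 4 * w x) ⊤ volume).toReal) ^ 2 := by
  classical
  set c : ℝ := ∫ z : ℝ × ℝ, Hfun z with hc_def
  have hc0 : 0 ≤ c := integral_nonneg Hfun_nonneg
  refine ⟨Real.sqrt 2 * (2 * (c + 1) + c) + 1, by positivity, ?_⟩
  intro w hw hI hStop
  set S := (eLpNorm (fun x : ℝ × ℝ => jap x ^ 4 * w x) ⊤ volume).toReal with hS_def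
  set I := ∫ x : ℝ × ℝ, jap x ^ 4 * |w x| with hI_def
  have hI0 : 0 ≤ I := integral_nonneg (fun x => by positivity)
  have hS0 : 0 ≤ S := ENNReal.toReal_nonneg
  set N := I + S with hN_def
  have hN0 : 0 ≤ N := add_nonneg hI0 hS0
  -- a.e. bound from the `L^∞` hypothesis
  have hae : ∀ᵐ y : ℝ × ℝ, jap y ^ 4 * |w y| ≤ S := by
    have h1 : ∀ᵐ y : ℝ × ℝ, (‖jap y ^ 4 * w y‖₊ : ENNReal)
        ≤ eLpNormEssSup (fun x : ℝ × ℝ => jap x ^ 4 * w x) volume := ae_le_eLpNormEssSup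
    have htop : eLpNormEssSup (fun x : ℝ × ℝ => jap x ^ 4 * w x) volume ≠ ⊤ := by
      rw [← eLpNorm_exponent_top]; exact hStop.ne
    filter_upwards [h1] with y hy
    have h2 := ENNReal.toReal_mono htop hy
    rw [ENNReal.coe_toReal, coe_nnnorm, Real.norm_eq_abs, abs_mul,
      abs_of_nonneg (by positivity : (0:ℝ) ≤ jap y ^ 4)] at h2
    rw [hS_def, eLpNorm_exponent_top]
    exact h2
  have hwa : ∀ᵐ y : ℝ × ℝ, |w y| ≤ S := by
    filter_upwards [hae] with y hy
    have h4 : (1:ℝ) ≤ jap y ^ 4 := one_le_pow₀ (one_le_jap y)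
    nlinarith [abs_nonneg (w y)]
  -- uniform bound for the velocity
  have hU : ∀ x : ℝ × ℝ, ‖Uvel w x‖ ≤ (c + 1) * N := by
    intro x
    have hne : ∀ᵐ y : ℝ × ℝ, y ≠ x := by
      rw [MeasureTheory.ae_iff]
      have h : {y : ℝ × ℝ | ¬ y ≠ x} = {x} := by ext y; simp
      rw [h]; exact measure_singleton x
    have hGint : Integrable (fun y : ℝ × ℝ => S * Hfun (x - y) + jap y ^ 4 * |w y|) :=
      ((Hfun_integrable.comp_sub_left x).const_mul S).add hI
    have hmono : ∀ᵐ y : ℝ × ℝ, ‖w y • biotK x y‖ ≤ S * Hfun (x - y) + jap y ^ 4 * |w y| := by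
      filter_upwards [hae, hne] with y hy hyx
      rw [norm_smul, Real.norm_eq_abs]
      have hxy : x ≠ y := fun h => hyx h.symm
      have hK := biotK_bound x y hxy
      have hvpos : 0 < vnorm (x - y) := vnorm_pos (sub_ne_zero.mpr hxy)
      have hjy := one_le_jap y
      have hj2 : jap y ^ 2 ≤ jap y ^ 4 := by
        have h1 : (1:ℝ) ≤ jap y ^ 2 := one_le_pow₀ hjy
        nlinarith
      by_cases hb : ‖x - y‖ ≤ 1
      · have hH : Hfun (x - y) = ‖x - y‖⁻¹ :=
          Set.indicator_of_mem (mem_closedBall_zero_iff.mpr hb) _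
        have hnpos : 0 < ‖x - y‖ := norm_pos_iff.mpr (sub_ne_zero.mpr hxy)
        have step2 : |w y| * (jap y ^ 2 / vnorm (x - y)) ≤ S * ‖x - y‖⁻¹ := by
          rw [div_eq_mul_inv, ← mul_assoc]
          have hA : |w y| * jap y ^ 2 ≤ S := by nlinarith [abs_nonneg (w y)]
          have hB : (vnorm (x - y))⁻¹ ≤ ‖x - y‖⁻¹ :=
            inv_anti₀ hnpos (norm_le_vnorm _)
          calc |w y| * jap y ^ 2 * (vnorm (x - y))⁻¹ ≤ S * (vnorm (x - y))⁻¹ :=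
                mul_le_mul_of_nonneg_right hA (by positivity)
            _ ≤ S * ‖x - y‖⁻¹ := mul_le_mul_of_nonneg_left hB hS0
        have step1 : |w y| * ‖biotK x y‖ ≤ |w y| * (jap y ^ 2 / vnorm (x - y)) :=
          mul_le_mul_of_nonneg_left hK (abs_nonneg _)
        have hnn : 0 ≤ jap y ^ 4 * |w y| := by positivity
        rw [hH]
        linarith
      · have hH : Hfun (x - y) = 0 :=
          Set.indicator_of_notMem (fun hm => hb (mem_closedBall_zero_iff.mp hm)) _
        have h1lt : 1 < vnorm (x - y) := lt_of_lt_of_le (not_le.mp hb) (norm_le_vnorm _)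
        have step : |w y| * ‖biotK x y‖ ≤ jap y ^ 4 * |w y| := by
          calc |w y| * ‖biotK x y‖ ≤ |w y| * (jap y ^ 2 / vnorm (x - y)) :=
                mul_le_mul_of_nonneg_left hK (abs_nonneg _)
            _ ≤ |w y| * jap y ^ 2 := by
                apply mul_le_mul_of_nonneg_left _ (abs_nonneg _)
                rw [div_le_iff₀ hvpos]
                nlinarith [sq_nonneg (jap y)]
            _ ≤ jap y ^ 4 * |w y| := by nlinarith [abs_nonneg (w y)]
        rw [hH]
        linarith [mul_nonneg hS0 (le_refl (0:ℝ))]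
    calc ‖Uvel w x‖ ≤ ∫ y : ℝ × ℝ, ‖w y • biotK x y‖ := norm_integral_le_integral_norm _
      _ ≤ ∫ y : ℝ × ℝ, (S * Hfun (x - y) + jap y ^ 4 * |w y|) :=
          integral_mono_of_nonneg (Filter.Eventually.of_forall fun y => norm_nonneg _)
            hGint hmono
      _ = S * c + I := by
          rw [integral_add ((Hfun_integrable.comp_sub_left x).const_mul S) hI,
            MeasureTheory.integral_const_mul, MeasureTheory.integral_sub_left_eq_self Hfun volume x]
      _ ≤ (c + 1) * N := by rw [hN_def]; nlinarith [mul_nonneg hc0 hI0]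
  -- bound for the first term
  have hvperp : ∀ x : ℝ × ℝ, ‖vperp x‖ ≤ jap x := by
    intro x
    have e1 : |x.1| ≤ ‖x‖ := (Real.norm_eq_abs x.1) ▸ norm_fst_le x
    have e2 : |x.2| ≤ ‖x‖ := (Real.norm_eq_abs x.2) ▸ norm_snd_le x
    have hj := norm_le_jap x
    rw [vperp, Prod.norm_def]
    apply max_le
    · rw [Real.norm_eq_abs, abs_neg]; linarith
    · rw [Real.norm_eq_abs]; linarith
  have hHvel : ∀ x : ℝ × ℝ, ‖w x • Hvel w x‖ ≤ (2 * ((c + 1) * N)) * (jap x ^ 4 * |w x|) := by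
    intro x
    rw [norm_smul, Real.norm_eq_abs]
    have hU' := hU x
    have hjx := one_le_jap x
    have hCN : 0 ≤ (c + 1) * N := mul_nonneg (by linarith) hN0
    have hHv : ‖Hvel w x‖ ≤ (c + 1) * N * (2 * jap x) := by
      have h1 : ‖((Uvel w x).1, (Uvel w x).2.1)‖ ≤ ‖Uvel w x‖ := by
        rw [Prod.norm_def]
        show max ‖(Uvel w x).1‖ ‖(Uvel w x).2.1‖ ≤ ‖Uvel w x‖
        exact max_le (norm_fst_le _) ((norm_fst_le (Uvel w x).2).trans (norm_snd_le _))
      have h2 : ‖(Uvel w x).2.2‖ ≤ ‖Uvel w x‖ :=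
        (norm_snd_le (Uvel w x).2).trans (norm_snd_le _)
      calc ‖Hvel w x‖ ≤ ‖((Uvel w x).1, (Uvel w x).2.1)‖ + ‖(Uvel w x).2.2 • vperp x‖ :=
            norm_add_le _ _
        _ ≤ ‖Uvel w x‖ + ‖Uvel w x‖ * jap x := by
            rw [norm_smul]
            exact add_le_add h1 (mul_le_mul h2 (hvperp x) (norm_nonneg _) (norm_nonneg _))
        _ ≤ (c + 1) * N + (c + 1) * N * jap x := by
            refine add_le_add hU' (mul_le_mul_of_nonneg_right hU' ?_)
            linarith
        _ ≤ (c + 1) * N * (2 * jap x) := by nlinarith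
    have h4 : jap x ≤ jap x ^ 4 := by
      have h3 : (1:ℝ) ≤ jap x ^ 3 := one_le_pow₀ hjx
      nlinarith
    calc |w x| * ‖Hvel w x‖ ≤ |w x| * ((c + 1) * N * (2 * jap x)) :=
          mul_le_mul_of_nonneg_left hHv (abs_nonneg _)
      _ ≤ (2 * ((c + 1) * N)) * (jap x ^ 4 * |w x|) := by
          nlinarith [mul_le_mul_of_nonneg_left
            (mul_le_mul_of_nonneg_right h4 (abs_nonneg (w x))) hCN]
  have hA : ‖∫ x : ℝ × ℝ, w x • Hvel w x‖ ≤ 2 * ((c + 1) * N) * I := by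
    calc ‖∫ x : ℝ × ℝ, w x • Hvel w x‖ ≤ ∫ x : ℝ × ℝ, ‖w x • Hvel w x‖ :=
          norm_integral_le_integral_norm _
      _ ≤ ∫ x : ℝ × ℝ, (2 * ((c + 1) * N)) * (jap x ^ 4 * |w x|) :=
          integral_mono_of_nonneg (Filter.Eventually.of_forall fun x => norm_nonneg _)
            (hI.const_mul _) (Filter.Eventually.of_forall hHvel)
      _ = 2 * ((c + 1) * N) * I := by rw [MeasureTheory.integral_const_mul]
  -- bound for the second term
  have hInner : ∀ x : ℝ × ℝ,
      ‖∫ y : ℝ × ℝ, (((if vnorm (x - y) ≤ 1 then Real.log (1 / vnorm (x - y)) else 0)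
          * w x * w y) / jap x) • vperp x‖ ≤ |w x| * S * c := by
    intro x
    have hjx := jap_pos x
    have hmono : ∀ᵐ y : ℝ × ℝ,
        ‖(((if vnorm (x - y) ≤ 1 then Real.log (1 / vnorm (x - y)) else 0)
            * w x * w y) / jap x) • vperp x‖ ≤ (|w x| * S) * Hfun (x - y) := by
      filter_upwards [hwa] with y hy
      rw [norm_smul, Real.norm_eq_abs]
      set L : ℝ := if vnorm (x - y) ≤ 1 then Real.log (1 / vnorm (x - y)) else 0 with hL
      have hLb : |L| * |w y| ≤ S * Hfun (x - y) := by
        by_cases hv : vnorm (x - y) ≤ 1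
        · by_cases hxy : x = y
          · have hv0 : vnorm (x - y) = 0 := by
              rw [hxy, sub_self]
              show Real.sqrt ((0:ℝ)^2 + (0:ℝ)^2) = 0
              simp
            rw [hL, if_pos hv, hv0]
            simp only [div_zero, Real.log_zero, abs_zero, zero_mul]
            exact mul_nonneg hS0 (Hfun_nonneg _)
          · have hvpos : 0 < vnorm (x - y) := vnorm_pos (sub_ne_zero.mpr hxy)
            have hnpos : 0 < ‖x - y‖ := norm_pos_iff.mpr (sub_ne_zero.mpr hxy)
            have hnb : ‖x - y‖ ≤ 1 := le_trans (norm_le_vnorm _) hv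
            have hH : Hfun (x - y) = ‖x - y‖⁻¹ :=
              Set.indicator_of_mem (mem_closedBall_zero_iff.mpr hnb) _
            have hLnn : 0 ≤ L := by
              rw [hL, if_pos hv]
              refine Real.log_nonneg ?_
              rw [le_div_iff₀ hvpos]; linarith
            have hLle : L ≤ ‖x - y‖⁻¹ := by
              rw [hL, if_pos hv]
              have hlog : Real.log (1 / vnorm (x - y)) ≤ 1 / vnorm (x - y) := by
                have := Real.log_le_sub_one_of_pos (by positivity : 0 < 1 / vnorm (x - y))
                linarith
              have hcmp : 1 / vnorm (x - y) ≤ ‖x - y‖⁻¹ := by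
                rw [one_div]
                exact inv_anti₀ hnpos (norm_le_vnorm _)
              linarith
            rw [hH, abs_of_nonneg hLnn]
            calc L * |w y| ≤ ‖x - y‖⁻¹ * S := by
                  apply mul_le_mul hLle hy (abs_nonneg _) (by positivity)
              _ = S * ‖x - y‖⁻¹ := by ring
        · rw [hL, if_neg hv]
          simp only [abs_zero, zero_mul]
          exact mul_nonneg hS0 (Hfun_nonneg _)
      have habs : |(L * w x * w y) / jap x| = |L| * |w x| * |w y| / jap x := by
        rw [abs_div, abs_mul, abs_mul, abs_of_pos hjx]
      rw [habs]
      calc |L| * |w x| * |w y| / jap x * ‖vperp x‖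
          ≤ |L| * |w x| * |w y| / jap x * jap x := by
            apply mul_le_mul_of_nonneg_left (hvperp x) (by positivity)
        _ = |L| * |w x| * |w y| := by field_simp
        _ = |w x| * (|L| * |w y|) := by ring
        _ ≤ |w x| * (S * Hfun (x - y)) := mul_le_mul_of_nonneg_left hLb (abs_nonneg _)
        _ = (|w x| * S) * Hfun (x - y) := by ring
    have hGint : Integrable (fun y : ℝ × ℝ => (|w x| * S) * Hfun (x - y)) :=
      (Hfun_integrable.comp_sub_left x).const_mul _
    calc ‖∫ y : ℝ × ℝ, (((if vnorm (x - y) ≤ 1 then Real.log (1 / vnorm (x - y)) else 0)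
            * w x * w y) / jap x) • vperp x‖
        ≤ ∫ y : ℝ × ℝ, ‖(((if vnorm (x - y) ≤ 1 then Real.log (1 / vnorm (x - y)) else 0)
            * w x * w y) / jap x) • vperp x‖ := norm_integral_le_integral_norm _
      _ ≤ ∫ y : ℝ × ℝ, (|w x| * S) * Hfun (x - y) :=
          integral_mono_of_nonneg (Filter.Eventually.of_forall fun y => norm_nonneg _)
            hGint hmono
      _ = |w x| * S * c := by
          rw [MeasureTheory.integral_const_mul, MeasureTheory.integral_sub_left_eq_self Hfun volume x]
  have hB : ‖∫ x : ℝ × ℝ, ∫ y : ℝ × ℝ,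
      (((if vnorm (x - y) ≤ 1 then Real.log (1 / vnorm (x - y)) else 0)
          * w x * w y) / jap x) • vperp x‖ ≤ S * c * I := by
    have hpt : ∀ x : ℝ × ℝ, ‖∫ y : ℝ × ℝ,
        (((if vnorm (x - y) ≤ 1 then Real.log (1 / vnorm (x - y)) else 0)
            * w x * w y) / jap x) • vperp x‖ ≤ (S * c) * (jap x ^ 4 * |w x|) := by
      intro x
      refine (hInner x).trans ?_
      have h4 : (1:ℝ) ≤ jap x ^ 4 := one_le_pow₀ (one_le_jap x)
      have h5 : |w x| ≤ jap x ^ 4 * |w x| := by nlinarith [abs_nonneg (w x)]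
      nlinarith [mul_le_mul_of_nonneg_left h5 (mul_nonneg hS0 hc0)]
    calc ‖∫ x : ℝ × ℝ, ∫ y : ℝ × ℝ,
          (((if vnorm (x - y) ≤ 1 then Real.log (1 / vnorm (x - y)) else 0)
              * w x * w y) / jap x) • vperp x‖
        ≤ ∫ x : ℝ × ℝ, ‖∫ y : ℝ × ℝ,
            (((if vnorm (x - y) ≤ 1 then Real.log (1 / vnorm (x - y)) else 0)
                * w x * w y) / jap x) • vperp x‖ := norm_integral_le_integral_norm _
      _ ≤ ∫ x : ℝ × ℝ, (S * c) * (jap x ^ 4 * |w x|) :=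
          integral_mono_of_nonneg (Filter.Eventually.of_forall fun x => norm_nonneg _)
            (hI.const_mul _) (Filter.Eventually.of_forall hpt)
      _ = (S * c) * I := by rw [MeasureTheory.integral_const_mul]
      _ = S * c * I := by ring
  -- conclusion
  have hNI : N * I ≤ N ^ 2 := by nlinarith
  have hSI : S * I ≤ N ^ 2 := by nlinarith
  have hAN : ‖∫ x : ℝ × ℝ, w x • Hvel w x‖ ≤ 2 * (c + 1) * N ^ 2 := by
    refine hA.trans ?_
    nlinarith [mul_le_mul_of_nonneg_left hNI (by positivity : (0:ℝ) ≤ 2 * (c + 1))]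
  have hBN : ‖∫ x : ℝ × ℝ, ∫ y : ℝ × ℝ,
      (((if vnorm (x - y) ≤ 1 then Real.log (1 / vnorm (x - y)) else 0)
          * w x * w y) / jap x) • vperp x‖ ≤ c * N ^ 2 := by
    refine hB.trans ?_
    nlinarith [mul_le_mul_of_nonneg_left hSI hc0]
  have hpi : (0:ℝ) < π := Real.pi_pos
  have hpile : 1 / (4 * π) ≤ 1 := by
    rw [div_le_one (by positivity)]
    nlinarith [Real.pi_gt_three]
  set A := ∫ x : ℝ × ℝ, w x • Hvel w x with hA_def
  set B := ∫ x : ℝ × ℝ, ∫ y : ℝ × ℝ,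
      (((if vnorm (x - y) ≤ 1 then Real.log (1 / vnorm (x - y)) else 0)
          * w x * w y) / jap x) • vperp x with hB_def
  have hT : ‖A + (1 / (4 * π)) • B‖ ≤ (2 * (c + 1) + c) * N ^ 2 := by
    calc ‖A + (1 / (4 * π)) • B‖ ≤ ‖A‖ + ‖(1 / (4 * π)) • B‖ := norm_add_le _ _
      _ = ‖A‖ + (1 / (4 * π)) * ‖B‖ := by
          rw [norm_smul, Real.norm_eq_abs, abs_of_pos (by positivity)]
      _ ≤ 2 * (c + 1) * N ^ 2 + 1 * ‖B‖ := by
          refine add_le_add hAN (mul_le_mul_of_nonneg_right hpile (norm_nonneg _))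
      _ ≤ 2 * (c + 1) * N ^ 2 + c * N ^ 2 := by
          rw [one_mul]; exact add_le_add (le_refl _) hBN
      _ = (2 * (c + 1) + c) * N ^ 2 := by ring
  calc vnorm (A + (1 / (4 * π)) • B) ≤ Real.sqrt 2 * ‖A + (1 / (4 * π)) • B‖ :=
        vnorm_le_norm _
    _ ≤ Real.sqrt 2 * ((2 * (c + 1) + c) * N ^ 2) :=
        mul_le_mul_of_nonneg_left hT (Real.sqrt_nonneg 2)
    _ ≤ (Real.sqrt 2 * (2 * (c + 1) + c) + 1) * N ^ 2 := by nlinarith [sq_nonneg N]
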